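/- Let G be a connected (P_5, claw)-free graph and c a fixed integer. If χ(G) ≤ c, then the order of G is bounded by a function of c only. -/

import Mathlib

open SimpleGraph

/-- `G` contains no induced subgraph isomorphic to `H`. -/
def HFree {W V : Type*} (H : SimpleGraph W) (G : SimpleGraph V) : Prop :=
  IsEmpty (H ↪g G)

/-- `G` is `k`-vertex-critical: `χ(G) = k` and deleting any vertex decreases
the chromatic number below `k`. -/
def IsKVertexCritical {V : Type*} (G : SimpleGraph V) (k : ℕ) : Prop :=
  G.chromaticNumber = k ∧ ∀ v : V, (G.induce {v}ᶜ).chromaticNumber < k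

/-- The star `K_{1,s}`: center `0`, leaves `1, …, s`. -/
def starGraph (s : ℕ) : SimpleGraph (Fin (s + 1)) :=
  SimpleGraph.fromRel (fun i _ => (i : ℕ) = 0)

/-- `K_{1,s} + P_1`: the disjoint union of the star `K_{1,s}`
(center `0`, leaves `1, …, s`) and the isolated vertex `s + 1`. -/
def starPlusP1 (s : ℕ) : SimpleGraph (Fin (s + 2)) :=
  SimpleGraph.fromRel (fun i j => (i : ℕ) = 0 ∧ (j : ℕ) ≠ 0 ∧ (j : ℕ) ≤ s)

/-- The complement of `K_3 + 2P_1`: vertices `0,1,2` pairwise nonadjacent,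
vertices `3,4` adjacent to everything else. -/
def coK3Plus2P1 : SimpleGraph (Fin 5) :=
  SimpleGraph.fromRel (fun i j => 3 ≤ (i : ℕ) ∨ 3 ≤ (j : ℕ))

section Aux

variable {V : Type} {G : SimpleGraph V}

lemma aux_dist_getVert_le (hc : G.Connected) {u v : V} (p : G.Walk u v) :
    ∀ i, i ≤ p.length → G.dist u (p.getVert i) ≤ i := by
  intro i
  induction i with
  | zero => intro _; simp
  | succ n ih =>
    intro h
    have h1 : G.dist u (p.getVert n) ≤ n := ih (by omega)
    have h2 : G.Adj (p.getVert n) (p.getVert (n + 1)) := p.adj_getVert_succ (by omega)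
    calc G.dist u (p.getVert (n + 1))
        ≤ G.dist u (p.getVert n) + G.dist (p.getVert n) (p.getVert (n + 1)) :=
          hc.dist_triangle
      _ ≤ n + 1 := by
          rw [SimpleGraph.dist_eq_one_iff_adj.mpr h2]; omega

lemma aux_dist_getVert_ge (hc : G.Connected) {u v : V} (p : G.Walk u v)
    (i : ℕ) (hi : i ≤ p.length) : G.dist (p.getVert i) v ≤ p.length - i := by
  have h := aux_dist_getVert_le hc p.reverse (p.length - i) (by simp)
  rw [p.getVert_reverse, show p.length - (p.length - i) = i by omega] at h
  rwa [SimpleGraph.dist_comm]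

lemma aux_diam_le_three (hc : G.Connected) (hP5 : HFree (pathGraph 5) G)
    (u v : V) : G.dist u v ≤ 3 := by
  have hP5' : IsEmpty (pathGraph 5 ↪g G) := hP5
  by_contra hlt
  push_neg at hlt
  obtain ⟨p, hp, hl⟩ := hc.exists_path_of_dist u v
  have hlen : 4 ≤ p.length := by omega
  set g : ℕ → V := p.getVert with hg
  have hadj : ∀ i, i + 1 ≤ 4 → G.Adj (g i) (g (i + 1)) :=
    fun i hi => p.adj_getVert_succ (by omega)
  have hne : ∀ i j, i < j → j ≤ 4 → g i ≠ g j := by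
    intro i j hij hj heq
    have h1 : G.dist u (g i) ≤ i := aux_dist_getVert_le hc p i (by omega)
    have h2 : G.dist (g j) v ≤ p.length - j := aux_dist_getVert_ge hc p j (by omega)
    have h3 : G.dist u v ≤ G.dist u (g i) + G.dist (g i) v := hc.dist_triangle
    rw [heq] at h1 h3
    omega
  have hnadj : ∀ i j, i + 2 ≤ j → j ≤ 4 → ¬ G.Adj (g i) (g j) := by
    intro i j hij hj hadj'
    have h1 : G.dist u (g i) ≤ i := aux_dist_getVert_le hc p i (by omega)
    have h2 : G.dist (g j) v ≤ p.length - j := aux_dist_getVert_ge hc p j (by omega)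
    have h3 : G.dist u v ≤ G.dist u (g i) + G.dist (g i) v := hc.dist_triangle
    have h4 : G.dist (g i) v ≤ G.dist (g i) (g j) + G.dist (g j) v := hc.dist_triangle
    have h5 : G.dist (g i) (g j) = 1 := SimpleGraph.dist_eq_one_iff_adj.mpr hadj'
    omega
  have key : ∀ a b : Fin 5, G.Adj (g a.val) (g b.val) ↔ (pathGraph 5).Adj a b := by
    intro a b
    rw [pathGraph_adj]
    constructor
    · intro hab
      by_contra hcon
      push_neg at hcon
      obtain ⟨hc1, hc2⟩ := hcon
      rcases Nat.lt_trichotomy a.val b.val with h' | h' | h'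
      · exact hnadj a.val b.val (by omega) (by omega) hab
      · rw [h'] at hab; exact G.irrefl hab
      · exact hnadj b.val a.val (by omega) (by omega) hab.symm
    · rintro (h' | h')
      · have := hadj a.val (by omega); rwa [h'] at this
      · have := hadj b.val (by omega); rw [h'] at this; exact this.symm
  have hinj : Function.Injective (fun k : Fin 5 => g k.val) := by
    intro a b hab
    simp only at hab
    rcases Nat.lt_trichotomy a.val b.val with h' | h' | h'
    · exact absurd hab (hne a.val b.val h' (by omega))
    · exact Fin.ext h'
    · exact absurd hab.symm (hne b.val a.val h' (by omega))
  exact hP5'.false ⟨⟨fun k => g k.val, hinj⟩, key _ _⟩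

lemma aux_deg_le [Fintype V] [DecidableEq V] [DecidableRel G.Adj]
    (hclaw : HFree (_root_.starGraph 3) G) {c : ℕ} (C : G.Coloring (Fin c)) (v : V) :
    G.degree v ≤ 2 * c := by
  have hclaw' : IsEmpty (_root_.starGraph 3 ↪g G) := hclaw
  by_contra h
  push_neg at h
  have hmap : ∀ a ∈ G.neighborFinset v, C a ∈ (Finset.univ : Finset (Fin c)) := by
    intro a _; exact Finset.mem_univ _
  have hcard : (Finset.univ : Finset (Fin c)).card * 2 < (G.neighborFinset v).card := by
    rw [Finset.card_univ, Fintype.card_fin]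
    rw [SimpleGraph.card_neighborFinset_eq_degree]
    omega
  obtain ⟨y, -, hy⟩ := Finset.exists_lt_card_fiber_of_mul_lt_card_of_maps_to hmap hcard
  obtain ⟨a, b, d, ha, hb, hd, hab, had, hbd⟩ := Finset.two_lt_card_iff.mp hy
  simp only [Finset.mem_filter, SimpleGraph.mem_neighborFinset] at ha hb hd
  have hva : G.Adj v a := ha.1
  have hvb : G.Adj v b := hb.1
  have hvd : G.Adj v d := hd.1
  have hnab : ¬ G.Adj a b := fun h' => C.valid h' (ha.2.trans hb.2.symm)
  have hnad : ¬ G.Adj a d := fun h' => C.valid h' (ha.2.trans hd.2.symm)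
  have hnbd : ¬ G.Adj b d := fun h' => C.valid h' (hb.2.trans hd.2.symm)
  have hnba : ¬ G.Adj b a := fun h' => hnab h'.symm
  have hnda : ¬ G.Adj d a := fun h' => hnad h'.symm
  have hndb : ¬ G.Adj d b := fun h' => hnbd h'.symm
  let f : Fin 4 → V := ![v, a, b, d]
  have hrel : ∀ i j : Fin 4, G.Adj (f i) (f j) ↔ (_root_.starGraph 3).Adj i j := by
    intro i j
    have hsg : ∀ i j : Fin 4, (_root_.starGraph 3).Adj i j ↔ i ≠ j ∧ ((i : ℕ) = 0 ∨ (j : ℕ) = 0) := by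
      intro i j
      simp [_root_.starGraph, SimpleGraph.fromRel_adj]
    rw [hsg]
    fin_cases i <;> fin_cases j <;>
      simp_all [f, G.irrefl, hva, hvb, hvd, hva.symm, hvb.symm, hvd.symm]
  have hinj : Function.Injective f := by
    have h0a : v ≠ a := hva.ne
    have h0b : v ≠ b := hvb.ne
    have h0d : v ≠ d := hvd.ne
    intro i j hij
    fin_cases i <;> fin_cases j <;> simp_all [f]
  exact hclaw'.false ⟨⟨f, hinj⟩, hrel _ _⟩

end Aux

theorem stmt6 : ∃ B : ℕ → ℕ,
    ∀ (c : ℕ) (V : Type) [Fintype V] (G : SimpleGraph V),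
      G.Connected → HFree (pathGraph 5) G → HFree (_root_.starGraph 3) G →
      G.chromaticNumber ≤ (c : ℕ∞) → Fintype.card V ≤ B c := by
  classical
  refine ⟨fun c => (2 * c + 1) ^ 3, ?_⟩
  intro c V _ G hconn hP5 hclaw hchrom
  rcases isEmpty_or_nonempty V with hV | hV
  · rw [Fintype.card_eq_zero]; exact Nat.zero_le _
  · obtain ⟨u⟩ := hV
    obtain ⟨C⟩ := SimpleGraph.chromaticNumber_le_iff_colorable.mp hchrom
    have hdeg : ∀ v : V, G.degree v ≤ 2 * c := fun v => aux_deg_le hclaw C v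
    let ball : ℕ → Finset V := fun k => Finset.univ.filter (fun w => G.dist u w ≤ k)
    have hball0 : (ball 0).card ≤ 1 := by
      have hsub : ball 0 ⊆ {u} := by
        intro w hw
        simp only [ball, Finset.mem_filter, Finset.mem_univ, true_and, Nat.le_zero] at hw
        have := (hconn.dist_eq_zero_iff).mp hw
        simp [this]
      exact (Finset.card_le_card hsub).trans (by simp)
    have hstep : ∀ k, (ball (k + 1)).card ≤ (ball k).card * (2 * c + 1) := by
      intro k
      have hsub : ball (k + 1) ⊆ (ball k).biUnion (fun w => insert w (G.neighborFinset w)) := by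
        intro w hw
        simp only [ball, Finset.mem_filter, Finset.mem_univ, true_and] at hw
        rcases Nat.lt_or_ge (G.dist u w) (k + 1) with h | h
        · exact Finset.mem_biUnion.mpr ⟨w, by
            simp [ball, Nat.lt_succ_iff.mp h], Finset.mem_insert_self _ _⟩
        · have hd : G.dist u w = k + 1 := le_antisymm hw h
          obtain ⟨p, hp, hl⟩ := hconn.exists_path_of_dist u w
          rw [hd] at hl
          have hx : G.Adj (p.getVert (p.length - 1)) w := by
            have h' := p.adj_getVert_succ (i := p.length - 1) (by omega)
            rwa [show p.length - 1 + 1 = p.length by omega, p.getVert_length] at h'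
          have hdx : G.dist u (p.getVert (p.length - 1)) ≤ k :=
            (aux_dist_getVert_le hconn p _ (by omega)).trans (by omega)
          exact Finset.mem_biUnion.mpr ⟨_, by simp [ball, hdx],
            Finset.mem_insert.mpr (Or.inr ((SimpleGraph.mem_neighborFinset _ _ _).mpr hx))⟩
      calc (ball (k + 1)).card ≤ _ := Finset.card_le_card hsub
        _ ≤ (ball k).card * (2 * c + 1) := by
            refine Finset.card_biUnion_le_card_mul _ _ _ (fun w _ => ?_)
            have h1 := Finset.card_insert_le w (G.neighborFinset w)
            have h2 := hdeg w
            rw [SimpleGraph.card_neighborFinset_eq_degree] at h1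
            omega
    have hpow : ∀ k, (ball k).card ≤ (2 * c + 1) ^ k := by
      intro k
      induction k with
      | zero => simpa using hball0
      | succ n ih =>
        calc (ball (n + 1)).card ≤ (ball n).card * (2 * c + 1) := hstep n
          _ ≤ (2 * c + 1) ^ n * (2 * c + 1) := Nat.mul_le_mul_right _ ih
          _ = (2 * c + 1) ^ (n + 1) := (pow_succ _ _).symm
    have huniv : (Finset.univ : Finset V) ⊆ ball 3 := by
      intro w _
      simp [ball, aux_diam_le_three hconn hP5 u w]
    calc Fintype.card V = (Finset.univ : Finset V).card := rfl
      _ ≤ (ball 3).card := Finset.card_le_card huniv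
      _ ≤ (2 * c + 1) ^ 3 := hpow 3
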